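/- Let R be a synchronous order on ℕ such that ℕ ∖ supp(R) is finite. Then there exists a complete synchronous order R' on ℕ such that (ℕ, R') is order-isomorphic to (supp(R), R). -/

import Mathlib

namespace SyncAux

variable {α : Type*} {σ σ' : Type*}

theorem isRegular_empty : Language.IsRegular (∅ : Set (List α)) :=
  ⟨PUnit, inferInstance, ⟨fun _ _ => PUnit.unit, PUnit.unit, ∅⟩, by
    ext w
    simp [DFA.accepts, DFA.acceptsFrom]⟩

private def prodDFA (M₁ : DFA α σ) (M₂ : DFA α σ') : DFA α (σ × σ') :=
  ⟨fun p a => (M₁.step p.1 a, M₂.step p.2 a), (M₁.start, M₂.start),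
    {p | p.1 ∈ M₁.accept ∨ p.2 ∈ M₂.accept}⟩

private theorem prodDFA_evalFrom (M₁ : DFA α σ) (M₂ : DFA α σ') (s₁ : σ) (s₂ : σ')
    (w : List α) :
    (prodDFA M₁ M₂).evalFrom (s₁, s₂) w = (M₁.evalFrom s₁ w, M₂.evalFrom s₂ w) := by
  induction w generalizing s₁ s₂ with
  | nil => rfl
  | cons a t ih => simpa [DFA.evalFrom, prodDFA] using ih _ _

theorem isRegular_union {L₁ L₂ : Set (List α)} (h₁ : Language.IsRegular L₁)
    (h₂ : Language.IsRegular L₂) : Language.IsRegular ((L₁ ∪ L₂ : Set (List α))) := by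
  obtain ⟨σ₁, _, M₁, hM₁⟩ := h₁
  obtain ⟨σ₂, _, M₂, hM₂⟩ := h₂
  refine ⟨σ₁ × σ₂, inferInstance, prodDFA M₁ M₂, ?_⟩
  ext w
  have e₁ : (w ∈ L₁) ↔ (M₁.eval w ∈ M₁.accept) := by rw [← hM₁]; exact Iff.rfl
  have e₂ : (w ∈ L₂) ↔ (M₂.eval w ∈ M₂.accept) := by rw [← hM₂]; exact Iff.rfl
  have hev : (prodDFA M₁ M₂).eval w = (M₁.eval w, M₂.eval w) :=
    prodDFA_evalFrom M₁ M₂ M₁.start M₂.start w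
  rw [DFA.mem_accepts, hev]
  show (M₁.eval w ∈ M₁.accept ∨ M₂.eval w ∈ M₂.accept) ↔ w ∈ L₁ ∪ L₂
  rw [Set.mem_union]
  exact or_congr e₁.symm e₂.symm

theorem isRegular_biUnion {ι : Type*} (s : Finset ι) (f : ι → Set (List α))
    (h : ∀ i ∈ s, Language.IsRegular (f i)) :
    Language.IsRegular (⋃ i ∈ s, f i) := by
  classical
  induction s using Finset.induction_on with
  | empty => simpa using (isRegular_empty : Language.IsRegular (∅ : Set (List α)))
  | insert a s hni ih =>
    have heq : (⋃ i ∈ insert a s, f i) = f a ∪ ⋃ i ∈ s, f i := by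
      simp [Set.iUnion_or, Set.iUnion_union_distrib]
    rw [heq]
    exact isRegular_union (h a (Finset.mem_insert_self a s))
      (ih fun i hi => h i (Finset.mem_insert_of_mem hi))

theorem isRegular_deriv {L : Set (List α)} (h : Language.IsRegular L) (u : List α) :
    Language.IsRegular {v | u ++ v ∈ L} := by
  obtain ⟨σ, _, M, hM⟩ := h
  refine ⟨σ, inferInstance, ⟨M.step, M.eval u, M.accept⟩, ?_⟩
  ext v
  have e : (u ++ v ∈ L) ↔ (M.evalFrom M.start (u ++ v) ∈ M.accept) := by
    rw [← hM]; exact Iff.rfl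
  show M.evalFrom (M.evalFrom M.start u) v ∈ M.accept ↔ v ∈ {v | u ++ v ∈ L}
  rw [← DFA.evalFrom_of_append]
  exact ⟨fun h => e.mpr h, fun h => e.mp h⟩

theorem isRegular_nil : Language.IsRegular ({[]} : Set (List α)) := by
  refine ⟨Bool, inferInstance, ⟨fun _ _ => false, true, {true}⟩, ?_⟩
  have hf : ∀ w : List α, (⟨fun _ _ => false, true, {true}⟩ : DFA α Bool).evalFrom false w
      = false := by
    intro w; induction w with
    | nil => rfl
    | cons a t ih => simpa [DFA.evalFrom] using ih
  ext w
  cases w with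
  | nil =>
    simp only [DFA.mem_accepts, DFA.eval, DFA.evalFrom_nil]
    exact ⟨fun _ => rfl, fun _ => rfl⟩
  | cons a t =>
    simp only [DFA.mem_accepts, DFA.eval]
    rw [show (⟨fun _ _ => false, true, {true}⟩ : DFA α Bool).evalFrom true (a :: t)
        = (⟨fun _ _ => false, true, {true}⟩ : DFA α Bool).evalFrom false t from rfl, hf]
    exact ⟨fun h => (Bool.false_ne_true h).elim, fun h => (List.cons_ne_nil a t h).elim⟩

theorem isRegular_cons_image {L : Set (List α)} [DecidableEq α] (h : Language.IsRegular L)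
    (a : α) : Language.IsRegular ((a :: ·) '' L) := by
  obtain ⟨σ, _, M, hM⟩ := h
  let M' : DFA α (Option (Option σ)) :=
    ⟨fun s? b => match s? with
      | none => none
      | some none => if b = a then some (some M.start) else none
      | some (some s) => some (some (M.step s b)),
      some none, (some ∘ some) '' M.accept⟩
  have hdead : ∀ w : List α, M'.evalFrom none w = none := by
    intro w; induction w with
    | nil => rfl
    | cons b t ih => simpa [DFA.evalFrom, M'] using ih
  have hsim : ∀ (w : List α) (s : σ), M'.evalFrom (some (some s)) w
      = some (some (M.evalFrom s w)) := by
    intro w; induction w with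
    | nil => intro s; rfl
    | cons b t ih => intro s; simpa [DFA.evalFrom, M'] using ih _
  have hL : ∀ v, v ∈ L ↔ M.evalFrom M.start v ∈ M.accept := by
    intro v; rw [← hM]; exact Iff.rfl
  refine ⟨Option (Option σ), inferInstance, M', ?_⟩
  ext w
  cases w with
  | nil =>
    simp only [DFA.mem_accepts, DFA.eval, DFA.evalFrom_nil]
    constructor
    · rintro ⟨s, _, hs⟩; simp [M'] at hs
    · rintro ⟨v, _, hv⟩; simp at hv
  | cons b t =>
    have hstep : M'.evalFrom M'.start (b :: t)
        = M'.evalFrom (if b = a then some (some M.start) else none) t := rfl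
    by_cases hb : b = a
    · simp only [DFA.mem_accepts, DFA.eval, hstep, if_pos hb, hsim]
      constructor
      · rintro ⟨s, hs, hseq⟩
        obtain rfl : s = M.evalFrom M.start t := by simpa using hseq
        exact ⟨t, (hL t).mpr hs, by rw [hb]⟩
      · rintro ⟨v, hv, hveq⟩
        obtain ⟨-, rfl⟩ : a = b ∧ v = t := by simpa using hveq
        exact ⟨M.evalFrom M.start v, (hL v).mp hv, rfl⟩
    · simp only [DFA.mem_accepts, DFA.eval, hstep, if_neg hb, hdead]
      constructor
      · rintro ⟨s, _, hs⟩; simp [M'] at hs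
      · rintro ⟨v, _, hveq⟩
        obtain ⟨hab, -⟩ : a = b ∧ v = t := by simpa using hveq
        exact absurd hab.symm hb

theorem isRegular_append_image {L : Set (List α)} [DecidableEq α] (h : Language.IsRegular L)
    (u : List α) : Language.IsRegular ((u ++ ·) '' L) := by
  induction u with
  | nil => simpa using h
  | cons a t ih =>
    have heq : ((a :: t ++ ·) '' L) = (a :: ·) '' ((t ++ ·) '' L) := by
      ext w; simp [Set.mem_image]
    rw [heq]
    exact isRegular_cons_image ih a

theorem isRegular_of_finite {L : Set (List α)} [DecidableEq α] (h : L.Finite) :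
    Language.IsRegular L := by
  classical
  have heq : L = ⋃ w ∈ h.toFinset, ({w} : Set (List α)) := by ext w; simp
  rw [heq]
  refine isRegular_biUnion _ _ fun w _ => ?_
  have hs : ({w} : Set (List α)) = (w ++ ·) '' {[]} := by ext v; simp
  rw [hs]
  exact isRegular_append_image isRegular_nil w

end SyncAux

/-- Encoding of a pair of naturals as a word over the alphabet `Fin 3`,
where letter `0` stands for `B`, `1` for `L`, `2` for `R`. -/
def encPair (k l : ℕ) : List (Fin 3) :=
  (List.range (max k l)).map (fun i => if i < min k l then 0 else if i < k then 1 else 2)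

/-- A binary relation on ℕ is synchronous if the language of encodings of its pairs
is regular. -/
def SyncRel (R : ℕ → ℕ → Prop) : Prop :=
  Language.IsRegular {w : List (Fin 3) | ∃ k l, R k l ∧ encPair k l = w}

/-- The support of a binary relation on ℕ. -/
def supp (R : ℕ → ℕ → Prop) : Set ℕ := {x | ∃ y, R x y ∨ R y x}

/-- A (strict partial) order on ℕ: a transitive relation with no 2-cycle
(in particular irreflexive). -/
def IsOrderRel (R : ℕ → ℕ → Prop) : Prop :=
  (∀ x y z, R x y → R y z → R x z) ∧ ¬∃ x y, R x y ∧ R y x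

/-- The relation is linear if any two distinct elements of the support are comparable. -/
def IsLinearRel (R : ℕ → ℕ → Prop) : Prop :=
  ∀ x ∈ supp R, ∀ y ∈ supp R, x ≠ y → R x y ∨ R y x

/-- The restriction of a relation on ℕ to its support. -/
def restrict (R : ℕ → ℕ → Prop) : supp R → supp R → Prop := fun a b => R a b

namespace SyncAux

variable (p : ℕ → Prop) [DecidablePred p]

theorem count_lt_count_iff {i k : ℕ} (hi : p i) (_hk : p k) :
    Nat.count p i < Nat.count p k ↔ i < k := by
  constructor
  · intro h
    by_contra hik
    push_neg at hik
    exact absurd (Nat.count_monotone p hik) (by omega)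
  · exact fun h => Nat.count_strict_mono hi h

theorem map_count_filter_range (n : ℕ) :
    (((List.range n).filter (fun i => decide (p i))).map (Nat.count p))
      = List.range (Nat.count p n) := by
  induction n with
  | zero => simp
  | succ n ih =>
    rw [List.range_succ, List.filter_append, List.map_append, ih, Nat.count_succ]
    by_cases hp : p n
    · simp [hp, List.range_succ]
    · simp [hp]

theorem map_getD_range {α : Type*} (l : List α) (d : α) :
    (List.range l.length).map (fun i => l.getD i d) = l := by
  induction l with
  | nil => simp
  | cons a t ih =>
    rw [List.length_cons, List.range_succ_eq_map, List.map_cons, List.map_map]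
    simp only [List.getD_cons_zero]
    exact congrArg (a :: ·) (Eq.trans (List.map_congr_left fun i _ => rfl) ih)

/-- Deletion of the positions not satisfying `p` from a word. -/
def delW (u : List (Fin 3)) : List (Fin 3) :=
  ((List.range u.length).filter (fun i => decide (p i))).map (fun i => u.getD i 0)

theorem delW_append (u v : List (Fin 3)) (hN : ∀ i, ¬ p i → i < u.length) :
    delW p (u ++ v) = delW p u ++ v := by
  rw [delW, delW, List.length_append, List.range_add, List.filter_append, List.map_append]
  congr 1
  · apply List.map_congr_left
    intro i hi
    exact List.getD_append _ _ _ _ (List.mem_range.mp (List.mem_of_mem_filter hi))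
  · rw [List.filter_eq_self.mpr, List.map_map]
    · have : ∀ i ∈ List.range v.length,
          ((fun i => (u ++ v).getD i 0) ∘ (u.length + ·)) i = v.getD i 0 := by
        intro i _
        simp only [Function.comp]
        rw [List.getD_append_right u v 0 (u.length + i) (Nat.le_add_right _ _)]
        congr 1
        omega
      rw [List.map_congr_left this, map_getD_range]
    · intro a ha
      simp only [List.mem_map, List.mem_range] at ha
      obtain ⟨i, _, rfl⟩ := ha
      simp only [decide_eq_true_eq]
      by_contra hpa
      exact absurd (hN _ hpa) (by omega)

theorem getD_encPair {k l i : ℕ} (hi : i < max k l) :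
    (encPair k l).getD i 0 = (if i < min k l then (0 : Fin 3) else if i < k then 1 else 2) := by
  rw [encPair, List.getD_eq_getElem _ _ (by simpa using hi)]
  simp

theorem delW_encPair {k l : ℕ} (hk : p k) (hl : p l) :
    delW p (encPair k l) = encPair (Nat.count p k) (Nat.count p l) := by
  have hlen : (encPair k l).length = max k l := by simp [encPair]
  have hminp : p (min k l) := by rcases min_cases k l with ⟨h, _⟩ | ⟨h, _⟩ <;> rw [h] <;>
    assumption
  have hmin : min (Nat.count p k) (Nat.count p l) = Nat.count p (min k l) :=
    ((Nat.count_monotone p).map_min).symm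
  have hmax : max (Nat.count p k) (Nat.count p l) = Nat.count p (max k l) :=
    ((Nat.count_monotone p).map_max).symm
  rw [delW, hlen]
  have step1 : ∀ i ∈ (List.range (max k l)).filter (fun i => decide (p i)),
      (encPair k l).getD i 0
        = (fun j => if j < min (Nat.count p k) (Nat.count p l) then (0 : Fin 3)
            else if j < Nat.count p k then 1 else 2) (Nat.count p i) := by
    intro i hi
    obtain ⟨hir, hip⟩ := List.mem_filter.mp hi
    have hip : p i := by simpa using hip
    have hilt : i < max k l := List.mem_range.mp hir
    rw [getD_encPair hilt]
    simp only [hmin, count_lt_count_iff p hip hminp, count_lt_count_iff p hip hk]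
  rw [List.map_congr_left step1]
  exact Eq.trans
    ((List.map_map
      (g := fun j => if j < Nat.count p k ⊓ Nat.count p l then (0 : Fin 3)
        else if j < Nat.count p k then 1 else 2)
      (f := Nat.count p) (l := (List.range (k ⊔ l)).filter (fun i => decide (p i)))).symm)
    (by rw [map_count_filter_range, encPair, hmax])

end SyncAux

theorem finite_complement_completion (R : ℕ → ℕ → Prop)
    (hs : SyncRel R) (ho : IsOrderRel R) (hfin : (supp R)ᶜ.Finite) :
    ∃ R' : ℕ → ℕ → Prop, SyncRel R' ∧ IsOrderRel R' ∧ supp R' = Set.univ ∧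
      Nonempty (R' ≃r restrict R) := by
  classical
  set p : ℕ → Prop := fun n => n ∈ supp R with hp
  have hinf : (setOf p).Infinite := by
    apply Set.infinite_of_finite_compl
    exact hfin
  have hpn : ∀ n, p (Nat.nth p n) := fun n => Nat.nth_mem_of_infinite hinf n
  have hcn : ∀ n, Nat.count p (Nat.nth p n) = n := fun n => Nat.count_nth_of_infinite hinf n
  refine ⟨fun k l => R (Nat.nth p k) (Nat.nth p l), ?_, ?_, ?_, ?_⟩
  · -- SyncRel
    show Language.IsRegular
      {w | ∃ k l, R (Nat.nth p k) (Nat.nth p l) ∧ encPair k l = w}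
    set L : Set (List (Fin 3)) := {w | ∃ k l, R k l ∧ encPair k l = w} with hLdef
    have hLreg : Language.IsRegular L := hs
    obtain ⟨N, hN⟩ : ∃ N, ∀ i, ¬ p i → i < N := by
      obtain ⟨b, hb⟩ := hfin.bddAbove
      exact ⟨b + 1, fun i hi => Nat.lt_succ_of_le (hb hi)⟩
    have hdel : {w | ∃ k l, R (Nat.nth p k) (Nat.nth p l) ∧ encPair k l = w}
        = SyncAux.delW p '' L := by
      ext w
      constructor
      · rintro ⟨k, l, hkl, rfl⟩
        refine ⟨encPair (Nat.nth p k) (Nat.nth p l), ⟨_, _, hkl, rfl⟩, ?_⟩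
        rw [SyncAux.delW_encPair p (hpn k) (hpn l), hcn, hcn]
      · rintro ⟨w', ⟨a, b, hab, rfl⟩, rfl⟩
        have hpa : p a := ⟨b, Or.inl hab⟩
        have hpb : p b := ⟨a, Or.inr hab⟩
        refine ⟨Nat.count p a, Nat.count p b, ?_, (SyncAux.delW_encPair p hpa hpb).symm⟩
        rw [Nat.nth_count hpa, Nat.nth_count hpb]
        exact hab
    have key : {w | ∃ k l, R (Nat.nth p k) (Nat.nth p l) ∧ encPair k l = w}
        = (SyncAux.delW p '' (L ∩ {w | w.length < N})) ∪
          ⋃ u ∈ (List.finite_length_eq (Fin 3) N).toFinset,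
            ((SyncAux.delW p u ++ ·) '' {v | u ++ v ∈ L}) := by
      rw [hdel]
      ext w
      constructor
      · rintro ⟨w', hw', rfl⟩
        by_cases hlen : w'.length < N
        · exact Or.inl ⟨w', ⟨hw', hlen⟩, rfl⟩
        · push_neg at hlen
          right
          set u := w'.take N with hu
          set v := w'.drop N with hv
          have huv : u ++ v = w' := List.take_append_drop N w'
          have hul : u.length = N := by rw [hu, List.length_take]; omega
          have hNu : ∀ i, ¬ p i → i < u.length := by rw [hul]; exact hN
          simp only [Set.mem_iUnion, Set.mem_image, Set.mem_setOf_eq, exists_prop]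
          refine ⟨u, ?_, v, ?_, ?_⟩
          · rw [Set.Finite.mem_toFinset]; exact hul
          · rw [huv]; exact hw'
          · rw [← (SyncAux.delW_append p u v hNu), huv]
      · rintro (⟨w', ⟨hw', -⟩, rfl⟩ | hw)
        · exact ⟨w', hw', rfl⟩
        · simp only [Set.mem_iUnion, Set.mem_image, Set.mem_setOf_eq, exists_prop] at hw
          obtain ⟨u, hu, v, hv, rfl⟩ := hw
          have hul : u.length = N := by rwa [Set.Finite.mem_toFinset] at hu
          have hNu : ∀ i, ¬ p i → i < u.length := by rw [hul]; exact hN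
          exact ⟨u ++ v, hv, SyncAux.delW_append p u v hNu⟩
    rw [key]
    apply SyncAux.isRegular_union
    · apply SyncAux.isRegular_of_finite
      exact Set.Finite.image _
        ((List.finite_length_lt (Fin 3) N).subset Set.inter_subset_right)
    · exact SyncAux.isRegular_biUnion _ _ fun u _ =>
        SyncAux.isRegular_append_image (SyncAux.isRegular_deriv hLreg u) (SyncAux.delW p u)
  · exact ⟨fun x y z hxy hyz => ho.1 _ _ _ hxy hyz,
      fun ⟨x, y, hxy, hyx⟩ => ho.2 ⟨_, _, hxy, hyx⟩⟩
  · ext x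
    simp only [Set.mem_univ, iff_true]
    obtain ⟨y, hy⟩ := hpn x
    have hpy : p y := by
      rcases hy with h | h
      · exact ⟨Nat.nth p x, Or.inr h⟩
      · exact ⟨Nat.nth p x, Or.inl h⟩
    refine ⟨Nat.count p y, ?_⟩
    show R (Nat.nth p x) (Nat.nth p (Nat.count p y)) ∨ R (Nat.nth p (Nat.count p y)) (Nat.nth p x)
    rw [Nat.nth_count hpy]
    exact hy
  · refine ⟨⟨⟨fun n => ⟨Nat.nth p n, hpn n⟩, fun a => Nat.count p a.1, ?_, ?_⟩, ?_⟩⟩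
    · intro n; exact hcn n
    · intro a; exact Subtype.ext (Nat.nth_count a.2)
    · intro a b; exact Iff.rfl
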